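/- arXiv:1504.04358 — 2 statements merged into one kernel-verified Lean document; each statement's English description precedes it below -/
import Mathlib

section
/- Fix n ≥ 1 with P(W_n = −1) > 0. Under the conditional probability P(· | W_n = −1), the random vector 𝐕(W₁−W₀, …, W_n−W_{n−1}) has the same distribution as (W₁−W₀, …, W_n−W_{n−1}) under the conditional probability P(· | ζ₁ = n). -/
open MeasureTheory Filter ProbabilityTheory
open scoped ENNReal NNReal Classical

/-- The random walk `W_n = X_1 + ⋯ + X_n` built from the increments `X`. -/
noncomputable def walk {Ω : Type*} (X : ℕ → Ω → ℤ) (n : ℕ) (ω : Ω) : ℤ :=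
  ∑ i ∈ Finset.range n, X i ω

/-- `ζ_j = inf {n ≥ 1 : W_n = -j}`. -/
noncomputable def hittingTime {Ω : Type*} (X : ℕ → Ω → ℤ) (j : ℕ) (ω : Ω) : ℕ :=
  sInf {n : ℕ | 1 ≤ n ∧ walk X n ω = -(j : ℤ)}

/-- The `i`-th cyclic shift of the vector `x`. -/
def cyclicShift {β : Type*} {n : ℕ} (i : ℕ) (x : Fin n → β) : Fin n → β :=
  fun k => x ⟨(i + (k : ℕ)) % n, Nat.mod_lt _ k.pos⟩

/-- Partial sums `w_j = x_1 + ⋯ + x_j` (for `j ≤ n`). -/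
noncomputable def partialSum {n : ℕ} (x : Fin n → ℤ) (j : ℕ) : ℤ :=
  ∑ l ∈ Finset.range j, if h : l < n then x ⟨l, h⟩ else 0

/-- `i*(x)`, the first time the walk of partial sums attains its minimum over `{1, …, n}`. -/
noncomputable def istar {n : ℕ} (x : Fin n → ℤ) : ℕ :=
  sInf {j : ℕ | 1 ≤ j ∧ ∀ m : ℕ, 1 ≤ m → m ≤ n → partialSum x j ≤ partialSum x m}

/-- The Vervaat transform of the vector `x`. -/
noncomputable def vervaat {n : ℕ} (x : Fin n → ℤ) : Fin n → ℤ := cyclicShift (istar x) x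

namespace VV
variable {n : ℕ}

def ent (x : Fin n → ℤ) (l : ℕ) : ℤ := if h : l < n then x ⟨l, h⟩ else 0

lemma partialSum_def (x : Fin n → ℤ) (j : ℕ) :
    partialSum x j = ∑ l ∈ Finset.range j, ent x l := rfl

noncomputable def Stil (x : Fin n → ℤ) (m : ℕ) : ℤ := ∑ l ∈ Finset.range m, ent x (l % n)

lemma Stil_eq (x : Fin n → ℤ) {m : ℕ} (hm : m ≤ n) : Stil x m = partialSum x m := by
  rw [Stil, partialSum_def]
  exact Finset.sum_congr rfl fun l hl => by
    rw [Nat.mod_eq_of_lt (lt_of_lt_of_le (Finset.mem_range.mp hl) hm)]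

lemma Stil_add (x : Fin n → ℤ) (m : ℕ) : Stil x (m + n) = Stil x m + Stil x n := by
  induction m with
  | zero => simp [Stil]
  | succ m ih =>
    have h1 : Stil x (m + 1 + n) = Stil x (m + n) + ent x (m % n) := by
      rw [show m + 1 + n = (m + n) + 1 by omega, Stil, Finset.sum_range_succ, ← Stil,
        Nat.add_mod_right]
    have h2 : Stil x (m + 1) = Stil x m + ent x (m % n) := by
      rw [Stil, Finset.sum_range_succ, ← Stil]
    rw [h1, ih, h2]; ring

lemma shift_pS (hn : 0 < n) (x : Fin n → ℤ) (i : ℕ) {j : ℕ} (hj : j ≤ n) :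
    partialSum (cyclicShift i x) j = Stil x (i + j) - Stil x i := by
  have h2 : Stil x (i + j) = Stil x i + ∑ l ∈ Finset.range j, ent x ((i + l) % n) := by
    induction j with
    | zero => simp
    | succ j ih =>
      rw [show i + (j + 1) = (i + j) + 1 by omega, Stil, Finset.sum_range_succ, ← Stil,
        ih (by omega), Finset.sum_range_succ, add_assoc]
  have h1 : partialSum (cyclicShift i x) j = ∑ l ∈ Finset.range j, ent x ((i + l) % n) := by
    rw [partialSum_def]
    refine Finset.sum_congr rfl fun l hl => ?_
    have hln : l < n := lt_of_lt_of_le (Finset.mem_range.mp hl) hj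
    rw [ent, dif_pos hln, ent, dif_pos (Nat.mod_lt _ hn)]
    rfl
  rw [h1, h2]; ring

lemma shift_sum (hn : 0 < n) (x : Fin n → ℤ) (i : ℕ) :
    partialSum (cyclicShift i x) n = partialSum x n := by
  rw [shift_pS hn x i le_rfl, Stil_add, Stil_eq x le_rfl]; ring

lemma shift_shift (x : Fin n → ℤ) (i j : ℕ) :
    cyclicShift j (cyclicShift i x) = cyclicShift (i + j) x := by
  funext k
  show x _ = x _
  congr 1
  apply Fin.ext
  show (i + (j + (k : ℕ)) % n) % n = (i + j + (k : ℕ)) % n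
  rw [Nat.add_mod_mod, add_assoc]

lemma shift_n (x : Fin n → ℤ) : cyclicShift n x = x := by
  funext k
  show x _ = x _
  congr 1
  apply Fin.ext
  show (n + (k : ℕ)) % n = (k : ℕ)
  rw [Nat.add_mod_left, Nat.mod_eq_of_lt k.isLt]

def MSet (x : Fin n → ℤ) : Set ℕ :=
  {j | 1 ≤ j ∧ ∀ m : ℕ, 1 ≤ m → m ≤ n → partialSum x j ≤ partialSum x m}

lemma istar_def (x : Fin n → ℤ) : istar x = sInf (MSet x) := rfl

lemma MSet_nonempty (hn : 1 ≤ n) (x : Fin n → ℤ) : ∃ j ∈ MSet x, j ≤ n := by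
  obtain ⟨j, hj, hmin⟩ := Finset.exists_min_image (Finset.Icc 1 n) (partialSum x)
    ⟨1, Finset.mem_Icc.mpr ⟨le_refl 1, hn⟩⟩
  have hj' := Finset.mem_Icc.mp hj
  exact ⟨j, ⟨hj'.1, fun m h1 h2 => hmin m (Finset.mem_Icc.mpr ⟨h1, h2⟩)⟩, hj'.2⟩

lemma istar_mem (hn : 1 ≤ n) (x : Fin n → ℤ) : istar x ∈ MSet x := by
  obtain ⟨j, hj, _⟩ := MSet_nonempty hn x
  exact Nat.sInf_mem ⟨j, hj⟩

lemma istar_le (hn : 1 ≤ n) (x : Fin n → ℤ) : istar x ≤ n := by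
  obtain ⟨j, hj, hjn⟩ := MSet_nonempty hn x
  exact le_trans (Nat.sInf_le hj) hjn

lemma istar_strict (hn : 1 ≤ n) (x : Fin n → ℤ) {k : ℕ} (h1 : 1 ≤ k) (hk : k < istar x) :
    partialSum x (istar x) < partialSum x k := by
  have hnot : k ∉ MSet x := Nat.notMem_of_lt_sInf hk
  by_contra hle
  push_neg at hle
  exact hnot ⟨h1, fun m hm1 hm2 => le_trans hle ((istar_mem hn x).2 m hm1 hm2)⟩

def Exc (x : Fin n → ℤ) : Prop :=
  partialSum x n = -1 ∧ ∀ j : ℕ, 1 ≤ j → j < n → 0 ≤ partialSum x j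

lemma exc_vervaat (hn : 1 ≤ n) (x : Fin n → ℤ) (hsum : partialSum x n = -1) :
    Exc (vervaat x) := by
  have hm1 : 1 ≤ istar x := (istar_mem hn x).1
  have hmn : istar x ≤ n := istar_le hn x
  have hmin := (istar_mem hn x).2
  constructor
  · rw [vervaat, shift_sum hn x (istar x), hsum]
  · intro j hj1 hjn
    rw [vervaat, shift_pS hn x (istar x) (le_of_lt hjn)]
    by_cases hc : istar x + j ≤ n
    · rw [Stil_eq x hc, Stil_eq x hmn]
      have := hmin (istar x + j) (by omega) hc
      omega
    · rw [show istar x + j = (istar x + j - n) + n by omega, Stil_add,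
        Stil_eq x hmn, Stil_eq x (show istar x + j - n ≤ n by omega), Stil_eq x le_rfl, hsum]
      have := istar_strict hn x (show 1 ≤ istar x + j - n by omega)
        (show istar x + j - n < istar x by omega)
      omega

lemma istar_shift (hn : 1 ≤ n) {y : Fin n → ℤ} (hy : Exc y) {i : ℕ} (hi : i < n) :
    istar (cyclicShift i y) = n - i := by
  obtain ⟨hsum, hnn⟩ := hy
  have hps : ∀ j, j ≤ n →
      partialSum (cyclicShift i y) j = Stil y (i + j) - partialSum y i := fun j hj => by
    rw [shift_pS hn y i hj, Stil_eq y (le_of_lt hi)]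
  have hval : partialSum (cyclicShift i y) (n - i) = -1 - partialSum y i := by
    rw [hps _ (by omega), show i + (n - i) = n by omega, Stil_eq y le_rfl]
    omega
  have hlb : ∀ m : ℕ, 1 ≤ m → m ≤ n →
      -1 - partialSum y i ≤ partialSum (cyclicShift i y) m := by
    intro m h1 h2
    rw [hps m h2]
    by_cases hc : i + m ≤ n
    · rw [Stil_eq y hc]
      rcases lt_or_eq_of_le hc with h | h
      · have := hnn (i + m) (by omega) h; omega
      · rw [h]; omega
    · rw [show i + m = (i + m - n) + n by omega, Stil_add,
        Stil_eq y le_rfl, hsum, Stil_eq y (show i + m - n ≤ n by omega)]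
      have := hnn (i + m - n) (by omega) (by omega)
      omega
  have hmem : n - i ∈ MSet (cyclicShift i y) :=
    ⟨by omega, fun m h1 h2 => by rw [hval]; exact hlb m h1 h2⟩
  have hstrict : ∀ j : ℕ, 1 ≤ j → j < n - i → j ∉ MSet (cyclicShift i y) := by
    intro j h1 h2 hmem'
    have hlt : partialSum (cyclicShift i y) (n - i) < partialSum (cyclicShift i y) j := by
      rw [hval, hps j (by omega), Stil_eq y (show i + j ≤ n by omega)]
      have := hnn (i + j) (by omega) (by omega)
      omega
    have := hmem'.2 (n - i) (by omega) (by omega)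
    omega
  have hle : istar (cyclicShift i y) ≤ n - i := Nat.sInf_le hmem
  have hmm : istar (cyclicShift i y) ∈ MSet (cyclicShift i y) := Nat.sInf_mem ⟨_, hmem⟩
  by_contra hne
  exact hstrict _ hmm.1 (by omega) hmm

lemma vervaat_shift (hn : 1 ≤ n) {y : Fin n → ℤ} (hy : Exc y) {i : ℕ} (hi : i < n) :
    vervaat (cyclicShift i y) = y := by
  rw [vervaat, istar_shift hn hy hi, shift_shift, show i + (n - i) = n by omega, shift_n]

lemma shift_inj (hn : 1 ≤ n) {y : Fin n → ℤ} (hy : Exc y) {i j : ℕ} (hi : i < n) (hj : j < n)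
    (h : cyclicShift i y = cyclicShift j y) : i = j := by
  have h1 := istar_shift hn hy hi
  rw [h, istar_shift hn hy hj] at h1
  omega

lemma shift_back (hn : 1 ≤ n) (x : Fin n → ℤ) :
    cyclicShift (n - istar x) (vervaat x) = x := by
  rw [vervaat, shift_shift,
    show istar x + (n - istar x) = n from by have := istar_le hn x; omega, shift_n]

lemma pS_succ (x : Fin n → ℤ) {j : ℕ} (hj : j < n) :
    partialSum x (j + 1) = partialSum x j + x ⟨j, hj⟩ := by
  rw [partialSum_def, Finset.sum_range_succ, ← partialSum_def, ent, dif_pos hj]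

lemma exc_of_nohit (hn : 1 ≤ n) {x : Fin n → ℤ} (hent : ∀ i, -1 ≤ x i)
    (hsum : partialSum x n = -1)
    (hno : ∀ j : ℕ, 1 ≤ j → j < n → partialSum x j ≠ -1) : Exc x := by
  refine ⟨hsum, ?_⟩
  have key : ∀ j, j < n → 0 ≤ partialSum x j := by
    intro j
    induction j with
    | zero => intro _; simp [partialSum_def]
    | succ j ih =>
      intro hj
      have h0 : 0 ≤ partialSum x j := ih (by omega)
      have hstep := pS_succ x (show j < n by omega)
      have hne := hno (j + 1) (by omega) hj
      have := hent ⟨j, by omega⟩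
      omega
  exact fun j _ h2 => key j h2

lemma exc_nohit {x : Fin n → ℤ} (hx : Exc x) :
    ∀ j : ℕ, 1 ≤ j → j < n → partialSum x j ≠ -1 := by
  intro j h1 h2
  have := hx.2 j h1 h2
  omega


lemma walk_eq_pS {Ω : Type*} (X : ℕ → Ω → ℤ) (ω : Ω) {j : ℕ} (hj : j ≤ n) :
    walk X j ω = partialSum (fun i : Fin n => X (i : ℕ) ω) j := by
  rw [walk, partialSum_def]
  refine Finset.sum_congr rfl fun l hl => ?_
  have hln : l < n := lt_of_lt_of_le (Finset.mem_range.mp hl) hj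
  rw [ent, dif_pos hln]

lemma hit_iff {Ω : Type*} (X : ℕ → Ω → ℤ) (ω : Ω) (hn : 1 ≤ n) :
    hittingTime X 1 ω = n ↔
      (walk X n ω = -1 ∧ ∀ j : ℕ, 1 ≤ j → j < n → walk X j ω ≠ -1) := by
  have hcast : -((1 : ℕ) : ℤ) = -1 := by norm_num
  set S : Set ℕ := {m : ℕ | 1 ≤ m ∧ walk X m ω = -((1 : ℕ) : ℤ)} with hS
  constructor
  · intro h
    have hne : S.Nonempty := by
      by_contra hemp
      rw [Set.not_nonempty_iff_eq_empty] at hemp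
      rw [hittingTime, ← hS, hemp, Nat.sInf_empty] at h
      omega
    have hmem := Nat.sInf_mem hne
    rw [hittingTime, ← hS] at h
    rw [h] at hmem
    refine ⟨by rw [← hcast]; exact hmem.2, ?_⟩
    intro j h1 hj hne'
    have hjS : j ∈ S := ⟨h1, by rw [hcast]; exact hne'⟩
    have := Nat.sInf_le hjS
    omega
  · rintro ⟨h1, h2⟩
    have hmem : n ∈ S := ⟨hn, by rw [hcast]; exact h1⟩
    have hle := Nat.sInf_le hmem
    have hmm := Nat.sInf_mem (⟨n, hmem⟩ : S.Nonempty)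
    rw [hittingTime, ← hS]
    by_contra hne
    have hlt : sInf S < n := by omega
    exact h2 (sInf S) hmm.1 hlt (by rw [← hcast]; exact hmm.2)

end VV

noncomputable def gfun (μ : PMF ℕ) (k : ℤ) : ℝ≥0∞ :=
  if -1 ≤ k then μ (k + 1).toNat else 0

noncomputable def pfun (μ : PMF ℕ) {n : ℕ} (x : Fin n → ℤ) : ℝ≥0∞ :=
  ∏ i : Fin n, gfun μ (x i)

lemma pfun_shift (μ : PMF ℕ) {n : ℕ} (x : Fin n → ℤ) (i : ℕ) :
    pfun μ (cyclicShift i x) = pfun μ x := by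
  rcases Nat.eq_zero_or_pos n with h | h
  · subst h; rfl
  have hinj : Function.Injective
      (fun k : Fin n => (⟨(i + (k : ℕ)) % n, Nat.mod_lt _ k.pos⟩ : Fin n)) := by
    intro a b hab
    have hv : (i + (a : ℕ)) % n = (i + (b : ℕ)) % n := congrArg Fin.val hab
    have : (a : ℕ) % n = (b : ℕ) % n := Nat.ModEq.add_left_cancel' i hv
    rw [Nat.mod_eq_of_lt a.isLt, Nat.mod_eq_of_lt b.isLt] at this
    exact Fin.ext this
  exact Fintype.prod_bijective _ (Finite.injective_iff_bijective.mp hinj)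
    (fun k => gfun μ (cyclicShift i x k)) (fun k => gfun μ (x k)) (fun k => rfl)

lemma pfun_zero (μ : PMF ℕ) {n : ℕ} {x : Fin n → ℤ} {i : Fin n} (hi : x i < -1) :
    pfun μ x = 0 :=
  Finset.prod_eq_zero (Finset.mem_univ i) (by rw [gfun, if_neg (by omega)])



theorem vervaat_transform_law
    (μ : PMF ℕ)
    {Ω : Type*} [MeasurableSpace Ω] (P : MeasureTheory.Measure Ω) [IsProbabilityMeasure P]
    (X : ℕ → Ω → ℤ) (hXmeas : ∀ i, Measurable (X i))
    (hXindep : iIndepFun X P)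
    (hXdist : ∀ i : ℕ, ∀ k : ℤ, P {ω | X i ω = k} = if -1 ≤ k then μ (k + 1).toNat else 0)
    (n : ℕ) (hn : 1 ≤ n) (hpos : 0 < P {ω | walk X n ω = -1}) :
    MeasureTheory.Measure.map (fun ω => vervaat (fun i : Fin n => X i ω))
        (P[|{ω | walk X n ω = -1}])
      = MeasureTheory.Measure.map (fun ω => fun i : Fin n => X i ω)
        (P[|{ω | hittingTime X 1 ω = n}]) := by
  classical
  set V : Ω → (Fin n → ℤ) := fun ω => fun i : Fin n => X (i : ℕ) ω with hVdef
  have hV : Measurable V := measurable_pi_lambda _ fun i => hXmeas i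
  have hAll : ∀ s : Set (Fin n → ℤ), MeasurableSet s := fun s => s.to_countable.measurableSet
  set Q : Measure (Fin n → ℤ) := P.map V with hQdef
  -- singleton values of Q
  have hQs : ∀ x : Fin n → ℤ, Q {x} = pfun μ x := by
    intro x
    rw [hQdef, Measure.map_apply hV (hAll _)]
    have hset : V ⁻¹' {x} = ⋂ i ∈ Finset.range n, X i ⁻¹' {VV.ent x i} := by
      ext ω
      simp only [Set.mem_preimage, Set.mem_singleton_iff, Set.mem_iInter, funext_iff]
      constructor
      · intro h i hi
        have hi' := Finset.mem_range.mp hi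
        rw [VV.ent, dif_pos hi']
        exact h ⟨i, hi'⟩
      · intro h k
        have hk := h (k : ℕ) (Finset.mem_range.mpr k.isLt)
        rw [VV.ent, dif_pos k.isLt] at hk
        simpa using hk
    rw [hset, hXindep.meas_biInter
      (fun i _ => ⟨{VV.ent x i}, measurableSet_singleton _, rfl⟩)]
    rw [pfun, ← Fin.prod_univ_eq_prod_range (fun l => P (X l ⁻¹' {VV.ent x l})) n]
    refine Finset.prod_congr rfl fun i _ => ?_
    have hpre : X (i : ℕ) ⁻¹' {VV.ent x (i : ℕ)} = {ω | X (i : ℕ) ω = VV.ent x (i : ℕ)} := by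
      ext ω; simp
    rw [hpre, hXdist]
    rw [VV.ent, dif_pos i.isLt]
    rfl
  -- the two relevant subsets of sequence space
  set SA : Set (Fin n → ℤ) := {x | partialSum x n = -1} with hSAdef
  set SZ : Set (Fin n → ℤ) :=
    {x | partialSum x n = -1 ∧ ∀ j : ℕ, 1 ≤ j → j < n → partialSum x j ≠ -1} with hSZdef
  -- the counting identity
  have key : ∀ y : Fin n → ℤ,
      Q (SA ∩ vervaat ⁻¹' {y}) = n * Q (SZ ∩ {y}) := by
    intro y
    by_cases hExc : VV.Exc y
    · have hset : SA ∩ vervaat ⁻¹' {y}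
          = ⋃ i : Fin n, {cyclicShift (i : ℕ) y} := by
        ext x
        simp only [Set.mem_inter_iff, Set.mem_preimage, Set.mem_singleton_iff,
          Set.mem_iUnion, hSAdef, Set.mem_setOf_eq]
        constructor
        · rintro ⟨hx1, hx2⟩
          refine ⟨⟨n - istar x, by
            have h1 := (VV.istar_mem hn x).1
            omega⟩, ?_⟩
          show x = cyclicShift (n - istar x) y
          rw [← hx2]
          exact (VV.shift_back hn x).symm
        · rintro ⟨i, rfl⟩
          exact ⟨by rw [VV.shift_sum hn y (i : ℕ)]; exact hExc.1,
            VV.vervaat_shift hn hExc i.isLt⟩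
      have hySZ : y ∈ SZ := ⟨hExc.1, VV.exc_nohit hExc⟩
      have hz : SZ ∩ {y} = {y} := Set.inter_eq_right.mpr (Set.singleton_subset_iff.mpr hySZ)
      rw [hset, hz, hQs,
        measure_iUnion (fun a b hab => Set.disjoint_singleton.mpr
          (fun h => hab (Fin.ext (VV.shift_inj hn hExc a.isLt b.isLt h))))
          (fun i => hAll _),
        tsum_fintype]
      have : ∀ i : Fin n, Q {cyclicShift (i : ℕ) y} = pfun μ y := fun i => by
        rw [hQs, pfun_shift]
      rw [Finset.sum_congr rfl fun i _ => this i, Finset.sum_const, Finset.card_univ,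
        Fintype.card_fin, nsmul_eq_mul]
    · have h1 : SA ∩ vervaat ⁻¹' {y} = ∅ := by
        ext x
        simp only [Set.mem_inter_iff, Set.mem_preimage, Set.mem_singleton_iff,
          Set.mem_empty_iff_false, iff_false, not_and, hSAdef, Set.mem_setOf_eq]
        intro hx1 hx2
        exact hExc (hx2 ▸ VV.exc_vervaat hn x hx1)
      have h2 : Q (SZ ∩ {y}) = 0 := by
        by_cases hy : y ∈ SZ
        · have hent : ¬ ∀ i, -1 ≤ y i :=
            fun hall => hExc (VV.exc_of_nohit hn hall hy.1 hy.2)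
          push_neg at hent
          obtain ⟨i, hi⟩ := hent
          have hle : Q (SZ ∩ {y}) ≤ Q {y} := measure_mono Set.inter_subset_right
          rw [hQs, pfun_zero μ (by omega : y i < -1)] at hle
          exact le_antisymm hle zero_le
        · rw [Set.inter_singleton_eq_empty.mpr hy, measure_empty]
      rw [h1, h2, measure_empty, mul_zero]
  -- the total mass identity
  have htot : Q SA = n * Q SZ := by
    have hSA : SA = ⋃ y : Fin n → ℤ, SA ∩ vervaat ⁻¹' {y} := by
      ext x
      simp only [Set.mem_iUnion, Set.mem_inter_iff, Set.mem_preimage, Set.mem_singleton_iff]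
      exact ⟨fun h => ⟨vervaat x, h, rfl⟩, fun ⟨y, h, _⟩ => h⟩
    have hSZ : SZ = ⋃ y : Fin n → ℤ, SZ ∩ {y} := by
      ext x
      simp only [Set.mem_iUnion, Set.mem_inter_iff, Set.mem_singleton_iff]
      exact ⟨fun h => ⟨x, h, rfl⟩, fun ⟨y, h, _⟩ => h⟩
    calc Q SA = Q (⋃ y : Fin n → ℤ, SA ∩ vervaat ⁻¹' {y}) := by rw [← hSA]
      _ = ∑' y : Fin n → ℤ, Q (SA ∩ vervaat ⁻¹' {y}) := by
          refine measure_iUnion ?_ (fun y => hAll _)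
          intro a b hab
          refine Set.disjoint_left.mpr ?_
          rintro x ⟨_, hxa⟩ ⟨_, hxb⟩
          exact hab (hxa.symm.trans hxb)
      _ = ∑' y : Fin n → ℤ, (n : ℝ≥0∞) * Q (SZ ∩ {y}) := by
          exact tsum_congr fun y => key y
      _ = n * ∑' y : Fin n → ℤ, Q (SZ ∩ {y}) := ENNReal.tsum_mul_left
      _ = n * Q SZ := by
          congr 1
          refine Eq.symm ?_
          calc Q SZ = Q (⋃ y : Fin n → ℤ, SZ ∩ {y}) := by rw [← hSZ]
            _ = ∑' y : Fin n → ℤ, Q (SZ ∩ {y}) := by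
                refine measure_iUnion ?_ (fun y => hAll _)
                intro a b hab
                refine Set.disjoint_left.mpr ?_
                rintro x ⟨_, hxa⟩ ⟨_, hxb⟩
                rw [Set.mem_singleton_iff] at hxa hxb
                exact hab (hxa.symm.trans hxb)
  -- identify the conditioning events
  have hA'eq : {ω | walk X n ω = -1} = V ⁻¹' SA := by
    ext ω
    simp only [Set.mem_setOf_eq, Set.mem_preimage, hSAdef, Set.mem_setOf_eq]
    rw [VV.walk_eq_pS X ω le_rfl]
  have hZ'eq : {ω | hittingTime X 1 ω = n} = V ⁻¹' SZ := by
    ext ω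
    simp only [Set.mem_setOf_eq, Set.mem_preimage, hSZdef, Set.mem_setOf_eq]
    rw [VV.hit_iff X ω hn]
    constructor
    · rintro ⟨h1, h2⟩
      exact ⟨by rw [← VV.walk_eq_pS X ω le_rfl]; exact h1,
        fun j hj1 hj2 => by rw [← VV.walk_eq_pS X ω (le_of_lt hj2)]; exact h2 j hj1 hj2⟩
    · rintro ⟨h1, h2⟩
      exact ⟨by rw [VV.walk_eq_pS X ω le_rfl]; exact h1,
        fun j hj1 hj2 => by rw [VV.walk_eq_pS X ω (le_of_lt hj2)]; exact h2 j hj1 hj2⟩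
  have hAmeas : MeasurableSet {ω | walk X n ω = -1} := by rw [hA'eq]; exact hV (hAll _)
  have hZmeas : MeasurableSet {ω | hittingTime X 1 ω = n} := by rw [hZ'eq]; exact hV (hAll _)
  -- final computation, singleton by singleton
  have hvm : Measurable (fun ω => vervaat (V ω)) := (measurable_of_countable vervaat).comp hV
  apply Measure.ext_of_singleton (α := Fin n → ℤ)
  intro y
  rw [Measure.map_apply hvm (hAll _), Measure.map_apply hV (hAll _),
    cond_apply hAmeas, cond_apply hZmeas]
  have e1 : {ω | walk X n ω = -1} ∩ (fun ω => vervaat (V ω)) ⁻¹' {y}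
      = V ⁻¹' (SA ∩ vervaat ⁻¹' {y}) := by
    rw [hA'eq, Set.preimage_inter]
    rfl
  have e2 : {ω | hittingTime X 1 ω = n} ∩ V ⁻¹' {y} = V ⁻¹' (SZ ∩ {y}) := by
    rw [hZ'eq, Set.preimage_inter]
  have e3 : P {ω | walk X n ω = -1} = Q SA := by
    rw [hA'eq, hQdef, Measure.map_apply hV (hAll _)]
  have e4 : P {ω | hittingTime X 1 ω = n} = Q SZ := by
    rw [hZ'eq, hQdef, Measure.map_apply hV (hAll _)]
  rw [e1, e2, e3, e4, ← Measure.map_apply hV (hAll _), ← Measure.map_apply hV (hAll _),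
    ← hQdef, key y, htot]
  have hn0 : (n : ℝ≥0∞) ≠ 0 := Nat.cast_ne_zero.mpr (by omega)
  have hnt : (n : ℝ≥0∞) ≠ ⊤ := ENNReal.natCast_ne_top n
  rw [ENNReal.mul_inv (Or.inl hn0) (Or.inl hnt)]
  calc (n : ℝ≥0∞)⁻¹ * (Q SZ)⁻¹ * ((n : ℝ≥0∞) * Q (SZ ∩ {y}))
      = ((n : ℝ≥0∞)⁻¹ * n) * ((Q SZ)⁻¹ * Q (SZ ∩ {y})) := by ring
    _ = (Q SZ)⁻¹ * Q (SZ ∩ {y}) := by rw [ENNReal.inv_mul_cancel hn0 hnt, one_mul]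
end

section
/- For every plane tree τ, one has W(τ) ≤ max_{0 ≤ i ≤ |τ|} 𝒲^{bfs}_i(τ) + 1 ≤ 2·W(τ), where 𝒲^{bfs}(τ) is the breadth-first coding path of τ and W(τ) is the width of τ. -/
open MeasureTheory Filter ProbabilityTheory
open scoped ENNReal NNReal Classical

structure PlaneTree where
  vertices : Finset (List ℕ)
  root_mem : [] ∈ vertices
  prefix_closed : ∀ u ∈ vertices, ∀ v : List ℕ, v <+: u → v ∈ vertices
  children : ∀ u ∈ vertices, ∃ k : ℕ, ∀ i : ℕ, u ++ [i] ∈ vertices ↔ 1 ≤ i ∧ i ≤ k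

namespace PlaneTree

noncomputable def size (τ : PlaneTree) : ℕ := τ.vertices.card

noncomputable def outdeg (τ : PlaneTree) (u : List ℕ) : ℕ :=
  (τ.vertices.filter fun v => ∃ i : ℕ, v = u ++ [i]).card

noncomputable def gen (τ : PlaneTree) (k : ℕ) : ℕ :=
  (τ.vertices.filter fun v => v.length = k).card

noncomputable def height (τ : PlaneTree) : ℕ := τ.vertices.sup List.length

noncomputable def width (τ : PlaneTree) : ℕ :=
  (Finset.range (τ.size + 1)).sup fun k => τ.gen k

noncomputable def maxOutdeg (τ : PlaneTree) : ℕ := τ.vertices.sup fun u => τ.outdeg u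

end PlaneTree

instance : MeasurableSpace PlaneTree := ⊤

/-- The Bienaymé–Galton–Watson measure: `BGW μ {τ} = ∏_{v ∈ τ} μ (k_v τ)`. -/
noncomputable def BGW (μ : PMF ℕ) : MeasureTheory.Measure PlaneTree :=
  MeasureTheory.Measure.sum fun τ : PlaneTree =>
    (∏ v ∈ τ.vertices, μ (τ.outdeg v)) • MeasureTheory.Measure.dirac τ

/-- The lexicographical (depth-first) strict order on vertices: ancestors first, then
first differing coordinate compared with `<`. -/
def lexLT : List ℕ → List ℕ → Prop := fun v w => List.Lex (· < ·) v w

/-- The reverse-lexicographical strict order: ancestors first, then first differing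
coordinate compared with `>`. -/
def revLexLT : List ℕ → List ℕ → Prop := fun v w => List.Lex (· > ·) v w

/-- The breadth-first search strict order. -/
def bfsLT : List ℕ → List ℕ → Prop := fun v w =>
  v.length < w.length ∨ (v.length = w.length ∧ List.Lex (· < ·) v w)

/-- The number of vertices of `τ` strictly preceding `v` for the order `lt`. -/
noncomputable def treeRank (lt : List ℕ → List ℕ → Prop) (τ : PlaneTree) (v : List ℕ) : ℕ :=
  (τ.vertices.filter fun w => lt w v).card

/-- The coding path of the tree `τ` associated with the vertex ordering `lt`:
`𝒲_0 = 0` and `𝒲_{m+1} = 𝒲_m + k_{u(m)} - 1`, where `u(0) ≺ u(1) ≺ ⋯` lists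
the vertices of `τ` in the order `lt`. -/
noncomputable def treePath (lt : List ℕ → List ℕ → Prop) (τ : PlaneTree) (m : ℕ) : ℤ :=
  (∑ v ∈ τ.vertices.filter (fun v => treeRank lt τ v < m), (τ.outdeg v : ℤ)) - m


section Aux

lemma bfsLT_trans {u v w : List ℕ} (h1 : bfsLT u v) (h2 : bfsLT v w) : bfsLT u w := by
  rcases h1 with h1 | ⟨h1, h1'⟩ <;> rcases h2 with h2 | ⟨h2, h2'⟩
  · exact Or.inl (h1.trans h2)
  · exact Or.inl (h2 ▸ h1)
  · exact Or.inl (h1 ▸ h2)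
  · exact Or.inr ⟨h1.trans h2, List.lex_trans (fun h1 h2 => Nat.lt_trans h1 h2) h1' h2'⟩

lemma bfsLT_irrefl (v : List ℕ) : ¬ bfsLT v v := by
  rintro (h | ⟨-, h⟩)
  · omega
  · exact List.lex_irrefl (fun x => Nat.lt_irrefl x) v h

lemma bfsLT_total {v w : List ℕ} (h : v ≠ w) : bfsLT v w ∨ bfsLT w v := by
  rcases Nat.lt_trichotomy v.length w.length with hl | hl | hl
  · exact Or.inl (Or.inl hl)
  · rcases trichotomous_of (List.Lex (·<·)) v w with h1 | h1 | h1
    · exact Or.inl (Or.inr ⟨hl, h1⟩)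
    · exact absurd h1 h
    · exact Or.inr (Or.inr ⟨hl.symm, h1⟩)
  · exact Or.inr (Or.inl hl)

lemma rank_sub (τ : PlaneTree) {v u : List ℕ} (h : bfsLT v u) :
    (τ.vertices.filter fun w => bfsLT w v) ⊆ τ.vertices.filter fun w => bfsLT w u := by
  intro w hw
  simp only [Finset.mem_filter] at hw ⊢
  exact ⟨hw.1, bfsLT_trans hw.2 h⟩

lemma rank_mono (τ : PlaneTree) {v u : List ℕ} (h : bfsLT v u) :
    treeRank bfsLT τ v ≤ treeRank bfsLT τ u :=
  Finset.card_le_card (rank_sub τ h)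

lemma rank_strict (τ : PlaneTree) {v u : List ℕ} (hv : v ∈ τ.vertices) (h : bfsLT v u) :
    treeRank bfsLT τ v < treeRank bfsLT τ u := by
  apply Finset.card_lt_card
  rw [Finset.ssubset_iff_of_subset (rank_sub τ h)]
  refine ⟨v, by simp only [Finset.mem_filter]; exact ⟨hv, h⟩, ?_⟩
  simp only [Finset.mem_filter, not_and]
  exact fun _ => bfsLT_irrefl v

lemma rank_root (τ : PlaneTree) : treeRank bfsLT τ ([] : List ℕ) = 0 := by
  unfold treeRank
  rw [Finset.card_eq_zero, Finset.filter_eq_empty_iff]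
  rintro w hw (h | ⟨h1, h2⟩)
  · simp at h
  · exact List.not_lex_nil h2

lemma card_rank_lt_le (τ : PlaneTree) (m : ℕ) :
    (τ.vertices.filter fun v => treeRank bfsLT τ v < m).card ≤ m := by
  have h := Finset.card_le_card_of_injOn (s := τ.vertices.filter fun v => treeRank bfsLT τ v < m)
    (t := Finset.range m) (treeRank bfsLT τ)
    (fun v hv => by
      simp only [Finset.mem_coe, Finset.mem_filter] at hv
      exact Finset.mem_range.mpr hv.2)
    (by
      intro v hv w hw heq
      simp only [Finset.coe_filter, Set.mem_setOf_eq] at hv hw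
      by_contra hne
      rcases bfsLT_total hne with h | h
      · exact absurd heq (Nat.ne_of_lt (rank_strict τ hv.1 h))
      · exact absurd heq.symm (Nat.ne_of_lt (rank_strict τ hw.1 h)))
  simpa using h

lemma sum_outdeg_eq (τ : PlaneTree) (S : Finset (List ℕ)) :
    ∑ u ∈ S, τ.outdeg u
      = (τ.vertices.filter fun w => w ≠ [] ∧ w.dropLast ∈ S).card := by
  have hrw : (τ.vertices.filter fun w => w ≠ [] ∧ w.dropLast ∈ S)
      = S.biUnion fun u => τ.vertices.filter fun w => ∃ i : ℕ, w = u ++ [i] := by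
    ext w
    simp only [Finset.mem_filter, Finset.mem_biUnion]
    constructor
    · rintro ⟨hw, hne, hd⟩
      exact ⟨w.dropLast, hd, hw, w.getLast hne, (List.dropLast_append_getLast hne).symm⟩
    · rintro ⟨u, hu, hw, i, rfl⟩
      refine ⟨hw, by simp, by simpa using hu⟩
  rw [hrw, Finset.card_biUnion]
  · rfl
  · intro u1 _ u2 _ hne
    rw [Function.onFun, Finset.disjoint_left]
    intro w hw1 hw2
    simp only [Finset.mem_filter] at hw1 hw2
    obtain ⟨-, i, rfl⟩ := hw1
    obtain ⟨-, j, hj⟩ := hw2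
    apply hne
    have := congrArg List.dropLast hj
    simpa using this

lemma filter_rank_eq (τ : PlaneTree) (k : ℕ) :
    (τ.vertices.filter fun v =>
        treeRank bfsLT τ v < (τ.vertices.filter fun v => v.length < k).card)
      = τ.vertices.filter fun v => v.length < k := by
  apply Finset.filter_congr
  intro v hv
  constructor
  · intro h
    by_contra hk
    push_neg at hk
    have hsub : (τ.vertices.filter fun w => w.length < k)
        ⊆ τ.vertices.filter fun w => bfsLT w v := by
      intro w hw
      simp only [Finset.mem_filter] at hw ⊢
      exact ⟨hw.1, Or.inl (lt_of_lt_of_le hw.2 hk)⟩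
    have hc := Finset.card_le_card hsub
    unfold treeRank at h
    omega
  · intro h
    have hsub : (τ.vertices.filter fun w => bfsLT w v)
        ⊆ τ.vertices.filter fun w => w.length < k := by
      intro w hw
      simp only [Finset.mem_filter] at hw ⊢
      refine ⟨hw.1, ?_⟩
      rcases hw.2 with h1 | ⟨h1, h2⟩ <;> omega
    have hss : (τ.vertices.filter fun w => bfsLT w v)
        ⊂ τ.vertices.filter fun w => w.length < k := by
      rw [Finset.ssubset_iff_of_subset hsub]
      refine ⟨v, by simp only [Finset.mem_filter]; exact ⟨hv, h⟩, ?_⟩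
      simp only [Finset.mem_filter, not_and]
      exact fun _ => bfsLT_irrefl v
    exact Finset.card_lt_card hss

lemma filter_child_eq (τ : PlaneTree) (k : ℕ) :
    (τ.vertices.filter fun w =>
        w ≠ [] ∧ w.dropLast ∈ τ.vertices.filter (fun v => v.length < k))
      = τ.vertices.filter fun w => 0 < w.length ∧ w.length ≤ k := by
  ext w
  simp only [Finset.mem_filter]
  constructor
  · rintro ⟨hw, hne, hd⟩
    simp only [Finset.mem_filter, List.length_dropLast] at hd
    have hpos : 0 < w.length := List.length_pos_iff.mpr hne
    exact ⟨hw, hpos, by omega⟩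
  · rintro ⟨hw, h0, hk⟩
    have hne : w ≠ [] := List.length_pos_iff.mp h0
    refine ⟨hw, hne, ?_⟩
    simp only [Finset.mem_filter, List.length_dropLast]
    exact ⟨τ.prefix_closed w hw _ (List.dropLast_prefix w), by omega⟩

lemma card_split (τ : PlaneTree) (k : ℕ) :
    (τ.vertices.filter fun v => v.length ≤ k).card
      = (τ.vertices.filter fun v => v.length < k).card + τ.gen k := by
  have h : (τ.vertices.filter fun v => v.length ≤ k)
      = (τ.vertices.filter fun v => v.length < k) ∪ (τ.vertices.filter fun v => v.length = k) := by
    rw [← Finset.filter_or]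
    exact Finset.filter_congr fun v _ => by omega
  rw [h, Finset.card_union_of_disjoint]
  · rfl
  · rw [Finset.disjoint_left]
    intro a ha hb
    simp only [Finset.mem_filter] at ha hb
    omega

lemma filter_len_zero (τ : PlaneTree) :
    (τ.vertices.filter fun v : List ℕ => v.length = 0) = {([] : List ℕ)} := by
  ext w
  simp only [Finset.mem_filter, Finset.mem_singleton, List.length_eq_zero_iff]
  exact ⟨fun h => h.2, fun h => ⟨h ▸ τ.root_mem, h⟩⟩

lemma card_pos_split (τ : PlaneTree) (k : ℕ) :
    (τ.vertices.filter fun v => 0 < v.length ∧ v.length ≤ k).card + 1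
      = (τ.vertices.filter fun v => v.length ≤ k).card := by
  have h : (τ.vertices.filter fun v => v.length ≤ k)
      = (τ.vertices.filter fun v => 0 < v.length ∧ v.length ≤ k)
        ∪ (τ.vertices.filter fun v : List ℕ => v.length = 0) := by
    rw [← Finset.filter_or]
    exact Finset.filter_congr fun v _ => by omega
  rw [h, Finset.card_union_of_disjoint, filter_len_zero]
  · simp
  · rw [Finset.disjoint_left]
    intro a ha hb
    simp only [Finset.mem_filter] at ha hb
    omega

lemma length_lt_size (τ : PlaneTree) {u : List ℕ} (hu : u ∈ τ.vertices) :
    u.length + 1 ≤ τ.size := by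
  have h := Finset.card_le_card_of_injOn (s := Finset.range (u.length + 1)) (t := τ.vertices)
    (fun i => u.take i)
    (fun i _ => τ.prefix_closed u hu _ (List.take_prefix i u))
    (by
      intro i hi j hj hij
      simp only [Finset.coe_range, Set.mem_Iio] at hi hj
      have := congrArg List.length hij
      simp only [List.length_take] at this
      omega)
  simpa [PlaneTree.size] using h

lemma gen_zero_eq (τ : PlaneTree) : τ.gen 0 = 1 := by
  unfold PlaneTree.gen
  rw [filter_len_zero]
  rfl

lemma treePath_eq (τ : PlaneTree) (k : ℕ) :
    treePath bfsLT τ ((τ.vertices.filter fun v => v.length < k).card)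
      = (τ.gen k : ℤ) - 1 := by
  unfold treePath
  rw [filter_rank_eq, ← Nat.cast_sum, sum_outdeg_eq, filter_child_eq]
  have h1 := card_pos_split τ k
  have h2 := card_split τ k
  omega

end Aux

theorem width_le_bfs_max_le_two_width (τ : PlaneTree) :
    (τ.width : ℤ) ≤
        (Finset.range (τ.size + 1)).sup'
          (Finset.nonempty_range_iff.mpr (Nat.succ_ne_zero _)) (treePath bfsLT τ) + 1
    ∧ (Finset.range (τ.size + 1)).sup'
          (Finset.nonempty_range_iff.mpr (Nat.succ_ne_zero _)) (treePath bfsLT τ) + 1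
        ≤ 2 * (τ.width : ℤ) := by
  classical
  constructor
  · -- lower bound
    obtain ⟨k, hk, hwk⟩ := Finset.exists_mem_eq_sup (Finset.range (τ.size + 1))
      (Finset.nonempty_range_iff.mpr (Nat.succ_ne_zero _)) fun k => τ.gen k
    have hmmem : (τ.vertices.filter fun v => v.length < k).card ∈ Finset.range (τ.size + 1) := by
      rw [Finset.mem_range]
      exact Nat.lt_succ_of_le (Finset.card_filter_le _ _)
    have hle := Finset.le_sup' (treePath bfsLT τ) hmmem
    rw [treePath_eq τ k] at hle
    have hwidth : τ.width = τ.gen k := hwk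
    rw [hwidth]
    omega
  · -- upper bound
    have hbound : ∀ m ∈ Finset.range (τ.size + 1),
        treePath bfsLT τ m ≤ 2 * (τ.width : ℤ) - 1 := by
      intro m _
      have hW1 : τ.gen 0 ≤ τ.width :=
        Finset.le_sup (f := fun k => τ.gen k) (Finset.mem_range.mpr (Nat.succ_pos τ.size))
      rw [gen_zero_eq] at hW1
      rcases Nat.eq_zero_or_pos m with rfl | hm
      · have hempty : (τ.vertices.filter fun v => treeRank bfsLT τ v < 0) = ∅ := by
          rw [Finset.filter_eq_empty_iff]
          intro v _
          omega
        unfold treePath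
        rw [hempty]
        simp only [Finset.sum_empty, Nat.cast_zero, sub_zero]
        omega
      · set S := τ.vertices.filter fun v => treeRank bfsLT τ v < m with hS
        have hroot : ([] : List ℕ) ∈ S := by
          rw [hS, Finset.mem_filter, rank_root]
          exact ⟨τ.root_mem, hm⟩
        obtain ⟨u, hu, hku⟩ := Finset.exists_mem_eq_sup S ⟨[], hroot⟩ List.length
        set k := S.sup List.length with hkdef
        have huS := hu
        rw [hS, Finset.mem_filter] at huS
        have hks : k + 1 ≤ τ.size := hku ▸ length_lt_size τ huS.1
        have hZk : τ.gen k ≤ τ.width :=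
          Finset.le_sup (f := fun k => τ.gen k) (Finset.mem_range.mpr (by omega))
        have hZk1 : τ.gen (k + 1) ≤ τ.width :=
          Finset.le_sup (f := fun k => τ.gen k) (Finset.mem_range.mpr (by omega))
        have hsub1 : (τ.vertices.filter fun v => v.length < k) ⊆ S := by
          intro v hv
          rw [Finset.mem_filter] at hv
          rw [hS, Finset.mem_filter]
          refine ⟨hv.1, ?_⟩
          have hlt : bfsLT v u := Or.inl (by omega)
          exact lt_of_le_of_lt (rank_mono τ hlt) huS.2
        have hm' : (τ.vertices.filter fun v => v.length < k).card ≤ m :=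
          le_trans (Finset.card_le_card hsub1) (card_rank_lt_le τ m)
        have hsub2 : (τ.vertices.filter fun w => w ≠ [] ∧ w.dropLast ∈ S)
            ⊆ τ.vertices.filter fun w => 0 < w.length ∧ w.length ≤ k + 1 := by
          intro w hw
          rw [Finset.mem_filter] at hw ⊢
          obtain ⟨hwv, hne, hd⟩ := hw
          have hlen : w.dropLast.length ≤ k := Finset.le_sup hd
          have hpos : 0 < w.length := List.length_pos_iff.mpr hne
          rw [List.length_dropLast] at hlen
          exact ⟨hwv, hpos, by omega⟩
        have hsum : ∑ v ∈ S, τ.outdeg v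
            ≤ (τ.vertices.filter fun w => 0 < w.length ∧ w.length ≤ k + 1).card := by
          rw [sum_outdeg_eq τ S]
          exact Finset.card_le_card hsub2
        have e1 := card_pos_split τ (k + 1)
        have e2 := card_split τ (k + 1)
        have e3 : (τ.vertices.filter fun v => v.length < k + 1).card
            = (τ.vertices.filter fun v => v.length ≤ k).card := by
          apply congrArg
          exact Finset.filter_congr fun v _ => by omega
        have e4 := card_split τ k
        unfold treePath
        rw [show (τ.vertices.filter fun v => treeRank bfsLT τ v < m) = S from hS.symm,
          ← Nat.cast_sum]
        omega
    have hfin : (Finset.range (τ.size + 1)).sup'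
        (Finset.nonempty_range_iff.mpr (Nat.succ_ne_zero _)) (treePath bfsLT τ)
        ≤ 2 * (τ.width : ℤ) - 1 :=
      Finset.sup'_le _ _ hbound
    omega
end
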